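/- (Characterization of the generalized Bayes rule.) Let Ω be a finite set, 𝒫 a nonempty set of probability measures on Ω, and B ⊆ Ω with inf_{P∈𝒫} P(B) > 0. Then for every gamble Z : Ω → ℝ, the number GBR_𝒫(Z|B) := sup_{P∈𝒫} E_{P(·|B)}[Z] is the unique real α satisfying sup_{P∈𝒫} E_P[1_B·(Z − α)] = 0; in particular GBR_𝒫(Z|B) = min{α ∈ ℝ : sup_{P∈𝒫} E_P[1_B·(Z − α)] = 0} and this minimum is attained. -/
import Mathlib


/-- `P` is a probability measure on the finite set `Ω`. -/
def IsProb {Ω : Type*} [Fintype Ω] (P : Ω → ℝ) : Prop :=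
  (∀ ω, 0 ≤ P ω) ∧ ∑ ω, P ω = 1

/-- Expectation of the gamble `Z` under `P`. -/
noncomputable def expct {Ω : Type*} [Fintype Ω] (P Z : Ω → ℝ) : ℝ :=
  ∑ ω, P ω * Z ω

/-- The probability `P(B)` of the event `B`. -/
noncomputable def probOf {Ω : Type*} [Fintype Ω] (P : Ω → ℝ) (B : Set Ω) : ℝ :=
  ∑ ω, B.indicator P ω

/-- The conditional probability measure `P(· | B)`. -/
noncomputable def condB {Ω : Type*} [Fintype Ω] (P : Ω → ℝ) (B : Set Ω) : Ω → ℝ :=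
  fun ω => B.indicator P ω / probOf P B

/-- Characterization of the generalized Bayes rule: if `inf_{P∈Ps} P(B) > 0`, then for
every gamble `Z`, `GBR_Ps(Z|B) := sup_{P∈Ps} E_{P(·|B)}[Z]` is the unique real `α` with
`sup_{P∈Ps} E_P[1_B·(Z − α)] = 0`, and it is the least element of the set of such `α`
(so the minimum is attained). -/
theorem gbr_characterization
    {Ω : Type*} [Fintype Ω]
    (Ps : Set (Ω → ℝ)) (hPsne : Ps.Nonempty) (hPs : ∀ P ∈ Ps, IsProb P)
    (B : Set Ω) (hB : 0 < sInf ((fun P => probOf P B) '' Ps)) :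
    ∀ Z : Ω → ℝ,
      (∀ α : ℝ,
        sSup ((fun P => expct P (B.indicator (fun ω => Z ω - α))) '' Ps) = 0
          ↔ α = sSup ((fun P => expct (condB P B) Z) '' Ps)) ∧
      IsLeast {α : ℝ |
          sSup ((fun P => expct P (B.indicator (fun ω => Z ω - α))) '' Ps) = 0}
        (sSup ((fun P => expct (condB P B) Z) '' Ps)) := by
  intro Z
  set δ := sInf ((fun P => probOf P B) '' Ps) with hδdef
  have hbddb : BddBelow ((fun P => probOf P B) '' Ps) := by
    refine ⟨0, ?_⟩
    rintro x ⟨P, hP, rfl⟩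
    exact Finset.sum_nonneg fun ω _ => Set.indicator_nonneg (fun ω _ => (hPs P hP).1 ω) ω
  have hδle : ∀ P ∈ Ps, δ ≤ probOf P B := fun P hP => csInf_le hbddb ⟨P, hP, rfl⟩
  have hbpos : ∀ P ∈ Ps, 0 < probOf P B := fun P hP => lt_of_lt_of_le hB (hδle P hP)
  have hPle1 : ∀ P ∈ Ps, ∀ ω, P ω ≤ 1 := by
    intro P hP ω
    calc P ω ≤ ∑ ω', P ω' :=
          Finset.single_le_sum (fun ω' _ => (hPs P hP).1 ω') (Finset.mem_univ ω)
      _ = 1 := (hPs P hP).2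
  have hble1 : ∀ P ∈ Ps, probOf P B ≤ 1 := by
    intro P hP
    calc probOf P B ≤ ∑ ω, P ω := Finset.sum_le_sum
          (fun ω _ => Set.indicator_le_self' (fun ω _ => (hPs P hP).1 ω) ω)
      _ = 1 := (hPs P hP).2
  -- generic upper bound on expectations
  have hexp_le : ∀ P ∈ Ps, ∀ W : Ω → ℝ, expct P W ≤ ∑ ω, |W ω| := by
    intro P hP W
    refine Finset.sum_le_sum fun ω _ => ?_
    calc P ω * W ω ≤ P ω * |W ω| :=
          mul_le_mul_of_nonneg_left (le_abs_self _) ((hPs P hP).1 ω)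
      _ ≤ 1 * |W ω| := mul_le_mul_of_nonneg_right (hPle1 P hP ω) (abs_nonneg _)
      _ = |W ω| := one_mul _
  -- key identity
  have key : ∀ α : ℝ, ∀ P ∈ Ps,
      expct P (B.indicator (fun ω => Z ω - α))
        = probOf P B * (expct (condB P B) Z - α) := by
    intro α P hP
    have hb := (hbpos P hP).ne'
    have h1 : expct (condB P B) Z = (∑ ω, B.indicator P ω * Z ω) / probOf P B := by
      unfold expct condB
      rw [Finset.sum_div]
      exact Finset.sum_congr rfl fun ω _ => by ring
    rw [h1, mul_sub, mul_div_cancel₀ _ hb]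
    unfold expct probOf
    rw [Finset.sum_mul, ← Finset.sum_sub_distrib]
    refine Finset.sum_congr rfl fun ω _ => ?_
    by_cases h : ω ∈ B <;>
      simp [Set.indicator_of_mem, Set.indicator_of_notMem, h] <;> ring
  -- nonemptiness and boundedness of the sup sets
  have hTne : ((fun P => expct (condB P B) Z) '' Ps).Nonempty := hPsne.image _
  have hSne : ∀ α : ℝ,
      ((fun P => expct P (B.indicator (fun ω => Z ω - α))) '' Ps).Nonempty :=
    fun α => hPsne.image _
  have hSbdd : ∀ α : ℝ,
      BddAbove ((fun P => expct P (B.indicator (fun ω => Z ω - α))) '' Ps) := by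
    intro α
    refine ⟨∑ ω, (|Z ω| + |α|), ?_⟩
    rintro x ⟨P, hP, rfl⟩
    calc expct P (B.indicator (fun ω => Z ω - α))
        ≤ ∑ ω, |B.indicator (fun ω => Z ω - α) ω| := hexp_le P hP _
      _ ≤ ∑ ω, (|Z ω| + |α|) := by
          refine Finset.sum_le_sum fun ω _ => ?_
          by_cases h : ω ∈ B
          · simp only [Set.indicator_of_mem h]
            exact (abs_sub _ _).trans (le_refl _)
          · simp [Set.indicator_of_notMem h]
            positivity
  have hTbdd : BddAbove ((fun P => expct (condB P B) Z) '' Ps) := by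
    refine ⟨(∑ ω, |Z ω|) / δ, ?_⟩
    rintro x ⟨P, hP, rfl⟩
    have hb := hbpos P hP
    have hkey := key 0 P hP
    have hE : expct P (B.indicator (fun ω => Z ω - 0)) ≤ ∑ ω, |Z ω| := by
      calc expct P (B.indicator (fun ω => Z ω - 0))
          ≤ ∑ ω, |B.indicator (fun ω => Z ω - 0) ω| := hexp_le P hP _
        _ ≤ ∑ ω, |Z ω| := by
            refine Finset.sum_le_sum fun ω _ => ?_
            by_cases h : ω ∈ B <;>
              simp [Set.indicator_of_mem, Set.indicator_of_notMem, h]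
    have hδb := hδle P hP
    rw [hkey, sub_zero] at hE
    show expct (condB P B) Z ≤ (∑ ω, |Z ω|) / δ
    have hM : (0:ℝ) ≤ ∑ ω, |Z ω| := Finset.sum_nonneg fun ω _ => abs_nonneg _
    rw [le_div_iff₀ hB]
    rcases le_or_gt 0 (expct (condB P B) Z) with hc | hc
    · calc expct (condB P B) Z * δ ≤ expct (condB P B) Z * probOf P B :=
            mul_le_mul_of_nonneg_left hδb hc
        _ = probOf P B * expct (condB P B) Z := mul_comm _ _
        _ ≤ ∑ ω, |Z ω| := hE
    · nlinarith
  set g := sSup ((fun P => expct (condB P B) Z) '' Ps) with hg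
  have hcle : ∀ P ∈ Ps, expct (condB P B) Z ≤ g := fun P hP =>
    le_csSup hTbdd ⟨P, hP, rfl⟩
  -- main claim : sSup (S g) = 0
  have hmain : sSup ((fun P => expct P (B.indicator (fun ω => Z ω - g))) '' Ps) = 0 := by
    have hle : sSup ((fun P => expct P (B.indicator (fun ω => Z ω - g))) '' Ps) ≤ 0 := by
      refine csSup_le (hSne g) ?_
      rintro x ⟨P, hP, rfl⟩
      show expct P (B.indicator (fun ω => Z ω - g)) ≤ 0
      rw [key g P hP]
      exact mul_nonpos_of_nonneg_of_nonpos (hbpos P hP).le (sub_nonpos.mpr (hcle P hP))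
    have hge : 0 ≤ sSup ((fun P => expct P (B.indicator (fun ω => Z ω - g))) '' Ps) := by
      have h1 : ∀ P ∈ Ps, expct (condB P B) Z
          ≤ g + sSup ((fun P => expct P (B.indicator (fun ω => Z ω - g))) '' Ps) := by
        intro P hP
        have h2 : expct (condB P B) Z - g
            ≤ expct P (B.indicator (fun ω => Z ω - g)) := by
          rw [key g P hP]
          have := mul_le_mul_of_nonpos_right (hble1 P hP)
            (sub_nonpos.mpr (hcle P hP))
          linarith
        have h3 := le_csSup (hSbdd g) (⟨P, hP, rfl⟩ :
          expct P (B.indicator (fun ω => Z ω - g)) ∈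
            (fun P => expct P (B.indicator (fun ω => Z ω - g))) '' Ps)
        linarith
      have h4 : g ≤ g + sSup ((fun P => expct P (B.indicator (fun ω => Z ω - g))) '' Ps) := by
        refine csSup_le hTne ?_
        rintro x ⟨P, hP, rfl⟩
        exact h1 P hP
      linarith
    linarith
  -- uniqueness
  have huniq : ∀ α : ℝ,
      sSup ((fun P => expct P (B.indicator (fun ω => Z ω - α))) '' Ps) = 0 → α = g := by
    intro α hα
    have hga : g ≤ α := by
      refine csSup_le hTne ?_
      rintro x ⟨P, hP, rfl⟩
      have h1 := le_csSup (hSbdd α) (⟨P, hP, rfl⟩ :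
        expct P (B.indicator (fun ω => Z ω - α)) ∈
          (fun P => expct P (B.indicator (fun ω => Z ω - α))) '' Ps)
      rw [hα, key α P hP] at h1
      nlinarith [hbpos P hP]
    by_contra hne
    have hlt : g < α := lt_of_le_of_ne hga (Ne.symm hne)
    have h5 : sSup ((fun P => expct P (B.indicator (fun ω => Z ω - α))) '' Ps)
        ≤ δ * (g - α) := by
      refine csSup_le (hSne α) ?_
      rintro x ⟨P, hP, rfl⟩
      show expct P (B.indicator (fun ω => Z ω - α)) ≤ δ * (g - α)
      rw [key α P hP]
      have h6 : expct (condB P B) Z - α ≤ g - α := by linarith [hcle P hP]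
      calc probOf P B * (expct (condB P B) Z - α)
          ≤ probOf P B * (g - α) :=
            mul_le_mul_of_nonneg_left h6 (hbpos P hP).le
        _ ≤ δ * (g - α) :=
            mul_le_mul_of_nonpos_right (hδle P hP) (by linarith)
    rw [hα] at h5
    nlinarith
  refine ⟨fun α => ⟨huniq α, fun h => h ▸ hmain⟩, hmain, fun α hα => (huniq α hα) ▸ le_refl _⟩
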